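/- For d ≥ 2 and 0 ≤ p ≤ 1, consider the isotropic state ρ_p = ((1−p)/d²) I⊗I + p|ψ⁺⟩⟨ψ⁺| on ℂ^d⊗ℂ^d, with extended correlation tensor M_{x,y}^{(n)} computed with respect to the generalized Gell-Mann bases (κ_A = κ_B = 2). Then with n = 2 and x = y = √d, the inequality ‖M_{√d,√d}^{(2)}‖_tr ≤ (2d + d − 1)/(2d) of the separability criterion holds if and only if p ≤ 1/(d+1); consequently the criterion detects the entanglement of every entangled isotropic state. -/

import Mathlib

open Matrix BigOperators Kronecker

/-- The trace norm (sum of singular values) of a complex matrix. -/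
noncomputable def traceNorm {m k : Type*} [Fintype m] [Fintype k] [DecidableEq k]
    (X : Matrix m k ℂ) : ℝ :=
  ∑ i, Real.sqrt ((Matrix.isHermitian_conjTranspose_mul_self X).eigenvalues i)

/-- The extended correlation tensor `M_{x,y}^{(n)}` for the Gell-Mann bases (`κ = 2`) on
`ℂ^d ⊗ ℂ^d`. -/
noncomputable def extCorrTensorGM (d n : ℕ) (x y : ℝ)
    (r s : Fin (d ^ 2 - 1) → ℂ)
    (T : Matrix (Fin (d ^ 2 - 1)) (Fin (d ^ 2 - 1)) ℂ) :
    Matrix (Fin n ⊕ Fin (d ^ 2 - 1)) (Fin n ⊕ Fin (d ^ 2 - 1)) ℂ :=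
  Matrix.fromBlocks
    (Matrix.of fun _ _ => ((x * y / (2 * d) : ℝ) : ℂ))
    (Matrix.of fun _ j => ((x / Real.sqrt (2 * d) : ℝ) : ℂ) * s j)
    (Matrix.of fun i _ => ((y / Real.sqrt (2 * d) : ℝ) : ℂ) * r i)
    T

/-- The projector `|ψ⁺⟩⟨ψ⁺|` onto the maximally entangled state. -/
noncomputable def maxEntProj (d : ℕ) : Matrix (Fin d × Fin d) (Fin d × Fin d) ℂ :=
  Matrix.of fun p q => if p.1 = p.2 ∧ q.1 = q.2 then ((d : ℂ))⁻¹ else 0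

section Helpers

variable {n : Type*} [Fintype n] [DecidableEq n]

lemma trace_eq_sum_eigs (A : Matrix n n ℂ) (hA : A.IsHermitian) :
    A.trace = ∑ i, ((hA.eigenvalues i : ℝ) : ℂ) := by
  conv_lhs => rw [hA.spectral_theorem, Unitary.conjStarAlgAut_apply]
  rw [trace_mul_cycle, Unitary.coe_star_mul_self, Matrix.one_mul, trace_diagonal]
  simp

lemma trace_sq_eq_sum_eigs (A : Matrix n n ℂ) (hA : A.IsHermitian) :
    (A * A).trace = ∑ i, (((hA.eigenvalues i) ^ 2 : ℝ) : ℂ) := by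
  conv_lhs => rw [hA.spectral_theorem, Unitary.conjStarAlgAut_apply]
  rw [show ∀ U D sU : Matrix n n ℂ, (U*D*sU)*(U*D*sU) = U*(D*(sU*U)*D)*sU from by
    intros; noncomm_ring]
  rw [Unitary.coe_star_mul_self, Matrix.mul_one]
  rw [trace_mul_cycle, Unitary.coe_star_mul_self, Matrix.one_mul,
    diagonal_mul_diagonal, trace_diagonal]
  simp [pow_two]

lemma eig_cubic (A : Matrix n n ℂ) (hA : A.IsHermitian) (a b : ℝ)
    (h : A * A * A = ((a : ℂ)) • (A * A) + ((b : ℂ)) • A) (i : n) :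
    (hA.eigenvalues i) ^ 3 = a * (hA.eigenvalues i) ^ 2 + b * (hA.eigenvalues i) := by
  set μ : ℝ := hA.eigenvalues i with hμ
  set v : n → ℂ := ⇑(hA.eigenvectorBasis i) with hv
  have hv0 : v ≠ 0 := by
    have := hA.eigenvectorBasis.orthonormal.ne_zero i
    intro hc
    apply this
    ext j
    exact congrFun hc j
  have h1 : A *ᵥ v = ((μ : ℂ)) • v := by
    rw [hA.mulVec_eigenvectorBasis i, RCLike.real_smul_eq_coe_smul (K := ℂ)]
    rfl
  have h2 : (A * A) *ᵥ v = ((μ : ℂ))^2 • v := by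
    rw [← Matrix.mulVec_mulVec, h1, Matrix.mulVec_smul, h1, smul_smul, ← pow_two]
  have h3 : (A * A * A) *ᵥ v = ((μ : ℂ))^3 • v := by
    rw [← Matrix.mulVec_mulVec, h1, Matrix.mulVec_smul, h2, smul_smul, ← pow_succ']
  have := congrArg (fun M => M *ᵥ v) h
  simp only [Matrix.add_mulVec, Matrix.smul_mulVec, h1, h2, h3] at this
  have key : (((μ:ℂ))^3 - ((a:ℂ) * (μ:ℂ)^2 + (b:ℂ) * (μ:ℂ))) • v = 0 := by
    rw [sub_smul, this]
    rw [smul_smul, smul_smul, ← add_smul]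
    abel
  rcases smul_eq_zero.mp key with hc | hc
  · have : ((μ^3 : ℝ) : ℂ) = (((a * μ^2 + b * μ : ℝ)) : ℂ) := by
      push_cast
      linear_combination hc
    exact_mod_cast this
  · exact absurd hc hv0

lemma trace_fromBlocks' {n m : Type*} [Fintype n] [Fintype m]
    (A : Matrix n n ℂ) (B : Matrix n m ℂ) (C : Matrix m n ℂ) (D : Matrix m m ℂ) :
    (Matrix.fromBlocks A B C D).trace = A.trace + D.trace := by
  simp [Matrix.trace, Fintype.sum_sum_type, Matrix.fromBlocks]

end Helpers

lemma trace_maxEntProj_mul (d : ℕ) (A B : Matrix (Fin d) (Fin d) ℂ) :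
    (maxEntProj d * (A ⊗ₖ B)).trace = (d : ℂ)⁻¹ * (A * Bᵀ).trace := by
  have step : (maxEntProj d * (A ⊗ₖ B)).trace
      = ∑ i : Fin d, ∑ j : Fin d, (d : ℂ)⁻¹ * (A j i * B j i) := by
    simp only [Matrix.trace, Matrix.diag, Matrix.mul_apply, maxEntProj, Matrix.of_apply,
      kroneckerMap_apply]
    rw [Fintype.sum_prod_type]
    refine Finset.sum_congr rfl fun i _ => ?_
    rw [Finset.sum_eq_single i]
    · rw [Fintype.sum_prod_type]
      refine Finset.sum_congr rfl fun j _ => ?_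
      rw [Finset.sum_eq_single j]
      · simp
      · intro j' _ hj'
        simp [Ne.symm hj']
      · intro h; exact absurd (Finset.mem_univ j) h
    · intro i' _ hi'
      simp [Ne.symm hi']
    · intro h; exact absurd (Finset.mem_univ i) h
  rw [step]
  simp only [Matrix.trace, Matrix.diag, Matrix.mul_apply, transpose_apply, Finset.mul_sum]
  rw [Finset.sum_comm]

lemma trace_one_mul_kron (d : ℕ) (A B : Matrix (Fin d) (Fin d) ℂ) :
    ((1 : Matrix (Fin d × Fin d) (Fin d × Fin d) ℂ) * (A ⊗ₖ B)).trace
      = A.trace * B.trace := by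
  rw [Matrix.one_mul, Matrix.trace_kronecker]

set_option linter.unreachableTactic false in
set_option linter.unusedTactic false in
lemma coeffs (d : ℕ) (hd : 2 ≤ d) (p : ℝ)
    (l : Fin (d ^ 2 - 1) → Matrix (Fin d) (Fin d) ℂ)
    (htr : ∀ i, (l i).trace = 0)
    (horth : ∀ i j, (l i * l j).trace = if i = j then (2 : ℂ) else 0)
    (r s : Fin (d ^ 2 - 1) → ℂ)
    (T : Matrix (Fin (d ^ 2 - 1)) (Fin (d ^ 2 - 1)) ℂ)
    (heq : (((1 - p) / (d : ℝ) ^ 2 : ℝ) : ℂ) •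
        (1 : Matrix (Fin d × Fin d) (Fin d × Fin d) ℂ) + ((p : ℝ) : ℂ) • maxEntProj d =
      ((d : ℂ)⁻¹ • (1 : Matrix (Fin d) (Fin d) ℂ)) ⊗ₖ
        ((d : ℂ)⁻¹ • (1 : Matrix (Fin d) (Fin d) ℂ))
      + ∑ i, r i • (l i ⊗ₖ ((d : ℂ)⁻¹ • (1 : Matrix (Fin d) (Fin d) ℂ)))
      + ∑ j, s j • (((d : ℂ)⁻¹ • (1 : Matrix (Fin d) (Fin d) ℂ)) ⊗ₖ l j)
      + ∑ i, ∑ j, T i j • (l i ⊗ₖ l j)) :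
    (∀ a, r a = 0) ∧ (∀ b, s b = 0) ∧
      (∀ a b, T a b = (p : ℂ) / (4 * d) * (l a * (l b)ᵀ).trace) := by
  have hd0 : (d : ℂ) ≠ 0 := by
    simp only [ne_eq, Nat.cast_eq_zero]; omega
  have key : ∀ A B : Matrix (Fin d) (Fin d) ℂ,
      (((1 - p) / (d : ℝ) ^ 2 : ℝ) : ℂ) * (A.trace * B.trace)
        + (p : ℂ) * ((d : ℂ)⁻¹ * (A * Bᵀ).trace)
      = (d : ℂ)⁻¹ * A.trace * ((d : ℂ)⁻¹ * B.trace)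
        + (∑ i, r i * ((l i * A).trace * ((d : ℂ)⁻¹ * B.trace)))
        + (∑ j, s j * ((d : ℂ)⁻¹ * A.trace * (l j * B).trace))
        + ∑ i, ∑ j, T i j * ((l i * A).trace * (l j * B).trace) := by
    intro A B
    have := congrArg (fun X => (X * (A ⊗ₖ B)).trace) heq
    simp only [Matrix.add_mul, Matrix.sum_mul, Matrix.smul_mul, Matrix.trace_add,
      Matrix.trace_sum, Matrix.trace_smul, ← Matrix.mul_kronecker_mul,
      Matrix.trace_kronecker, trace_one_mul_kron, trace_maxEntProj_mul,
      smul_mul_assoc, Matrix.one_mul, smul_eq_mul] at this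
    convert this using 2 <;> ring_nf
  constructor
  · intro a
    have h := key (l a) 1
    simp only [Matrix.trace_one, Matrix.mul_one, htr, horth, Matrix.transpose_one,
      mul_zero, zero_mul, add_zero, zero_add, mul_ite, mul_one, ite_mul, zero_mul,
      Finset.sum_ite_eq', Finset.mem_univ, if_true, Finset.sum_const_zero,
      Fintype.card_fin] at h
    rw [inv_mul_cancel₀ hd0, mul_one] at h
    have h2 := h.symm
    rcases mul_eq_zero.mp h2 with hc | hc
    · exact hc
    · norm_num at hc
  constructor
  · intro b
    have h := key 1 (l b)
    simp only [Matrix.trace_one, Matrix.one_mul, Matrix.mul_one, htr, horth,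
      Matrix.trace_transpose, mul_zero, zero_mul, add_zero, zero_add, mul_ite, mul_one,
      ite_mul, zero_mul, Finset.sum_ite_eq', Finset.mem_univ, if_true,
      Finset.sum_const_zero, Fintype.card_fin] at h
    rw [inv_mul_cancel₀ hd0, one_mul] at h
    have h2 := h.symm
    rcases mul_eq_zero.mp h2 with hc | hc
    · exact hc
    · norm_num at hc
  · intro a b
    have h := key (l a) (l b)
    simp only [htr, horth, Matrix.trace_transpose, mul_zero, zero_mul, add_zero, zero_add,
      mul_ite, mul_one, ite_mul, zero_mul, Finset.sum_ite_eq', Finset.mem_univ, if_true,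
      Finset.sum_const_zero, Fintype.card_fin] at h
    have h4 : T a b = (p : ℂ) * (((d : ℂ))⁻¹ * (l a * (l b)ᵀ).trace) / 4 := by
      linear_combination -h / 4
    rw [h4, div_eq_mul_inv ((p:ℂ)) (4 * (d:ℂ)), mul_inv]
    ring

section Cmat

variable {d : ℕ}

lemma C_alt (l : Fin (d ^ 2 - 1) → Matrix (Fin d) (Fin d) ℂ) (a b : Fin (d ^ 2 - 1)) :
    ((l a)ᵀ * l b).trace = (l a * (l b)ᵀ).trace := by
  rw [← Matrix.trace_transpose ((l a)ᵀ * l b), Matrix.transpose_mul,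
    Matrix.transpose_transpose, Matrix.trace_mul_comm]

lemma C_symm (l : Fin (d ^ 2 - 1) → Matrix (Fin d) (Fin d) ℂ) (a b : Fin (d ^ 2 - 1)) :
    (l a * (l b)ᵀ).trace = (l b * (l a)ᵀ).trace := by
  rw [← Matrix.trace_transpose (l a * (l b)ᵀ), Matrix.transpose_mul,
    Matrix.transpose_transpose, Matrix.trace_mul_comm]

lemma C_real (l : Fin (d ^ 2 - 1) → Matrix (Fin d) (Fin d) ℂ)
    (hherm : ∀ i, (l i).IsHermitian) (a b : Fin (d ^ 2 - 1)) :
    star ((l a * (l b)ᵀ).trace) = (l a * (l b)ᵀ).trace := by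
  have hb : ((l b)ᵀ)ᴴ = (l b)ᵀ := by
    ext i j
    exact (hherm b).apply j i
  rw [← Matrix.trace_conjTranspose, Matrix.conjTranspose_mul, hb, (hherm a).eq,
    Matrix.trace_mul_comm]

lemma C_mul_C (l : Fin (d ^ 2 - 1) → Matrix (Fin d) (Fin d) ℂ)
    (htr : ∀ i, (l i).trace = 0)
    (horth : ∀ i j, (l i * l j).trace = if i = j then (2 : ℂ) else 0)
    (hspan : ∀ X : Matrix (Fin d) (Fin d) ℂ, X.trace = 0 →
      X ∈ Submodule.span ℂ (Set.range l))
    (a b : Fin (d ^ 2 - 1)) :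
    ∑ j, (l a * (l j)ᵀ).trace * (l b * (l j)ᵀ).trace = if a = b then (4 : ℂ) else 0 := by
  have hta : ((l a)ᵀ).trace = 0 := by rw [Matrix.trace_transpose]; exact htr a
  obtain ⟨c, hc⟩ := (Submodule.mem_span_range_iff_exists_fun ℂ).mp (hspan ((l a)ᵀ) hta)
  have step1 : ∀ j, (l a * (l j)ᵀ).trace = 2 * c j := by
    intro j
    rw [← C_alt, ← hc, Matrix.sum_mul, Matrix.trace_sum]
    simp only [Matrix.smul_mul, Matrix.trace_smul, horth, smul_eq_mul, mul_ite, mul_zero,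
      Finset.sum_ite_eq', Finset.mem_univ, if_true]
    ring
  have step2 : ((l a)ᵀ * (l b)ᵀ).trace = if a = b then (2 : ℂ) else 0 := by
    rw [← Matrix.transpose_mul, Matrix.trace_transpose, horth b a]
    simp [eq_comm]
  have step3 : ((l a)ᵀ * (l b)ᵀ).trace = ∑ j, c j * (l b * (l j)ᵀ).trace := by
    rw [← hc, Matrix.sum_mul, Matrix.trace_sum]
    refine Finset.sum_congr rfl fun j _ => ?_
    rw [Matrix.smul_mul, Matrix.trace_smul, smul_eq_mul]
    congr 1
    exact C_symm l j b
  calc ∑ j, (l a * (l j)ᵀ).trace * (l b * (l j)ᵀ).trace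
      = ∑ j, 2 * (c j * (l b * (l j)ᵀ).trace) := by
        refine Finset.sum_congr rfl fun j _ => ?_
        rw [step1 j]; ring
    _ = 2 * ((l a)ᵀ * (l b)ᵀ).trace := by rw [← Finset.mul_sum, ← step3]
    _ = if a = b then (4 : ℂ) else 0 := by rw [step2]; split <;> norm_num

end Cmat

set_option maxHeartbeats 1000000 in
/-- **Isotropic states**: with `n = 2` and `x = y = √d`, the separability-criterion inequality
`‖M_{√d,√d}^{(2)}‖_tr ≤ (2d + d − 1)/(2d)` holds iff `p ≤ 1/(d+1)`. -/
theorem isotropic_criterion_iff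
    (d : ℕ) (hd : 2 ≤ d) (p : ℝ) (hp : 0 ≤ p) (hp1 : p ≤ 1)
    (l : Fin (d ^ 2 - 1) → Matrix (Fin d) (Fin d) ℂ)
    (hherm : ∀ i, (l i).IsHermitian)
    (htr : ∀ i, (l i).trace = 0)
    (horth : ∀ i j, (l i * l j).trace = if i = j then (2 : ℂ) else 0)
    (hspan : ∀ X : Matrix (Fin d) (Fin d) ℂ, X.trace = 0 →
      X ∈ Submodule.span ℂ (Set.range l))
    (r s : Fin (d ^ 2 - 1) → ℂ)
    (T : Matrix (Fin (d ^ 2 - 1)) (Fin (d ^ 2 - 1)) ℂ)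
    (ρ : Matrix (Fin d × Fin d) (Fin d × Fin d) ℂ)
    (hρ : ρ = (((1 - p) / (d : ℝ) ^ 2 : ℝ) : ℂ) •
        (1 : Matrix (Fin d × Fin d) (Fin d × Fin d) ℂ) + ((p : ℝ) : ℂ) • maxEntProj d)
    (hexp : ρ =
      ((d : ℂ)⁻¹ • (1 : Matrix (Fin d) (Fin d) ℂ)) ⊗ₖ
        ((d : ℂ)⁻¹ • (1 : Matrix (Fin d) (Fin d) ℂ))
      + ∑ i, r i • (l i ⊗ₖ ((d : ℂ)⁻¹ • (1 : Matrix (Fin d) (Fin d) ℂ)))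
      + ∑ j, s j • (((d : ℂ)⁻¹ • (1 : Matrix (Fin d) (Fin d) ℂ)) ⊗ₖ l j)
      + ∑ i, ∑ j, T i j • (l i ⊗ₖ l j))
 :
    traceNorm (extCorrTensorGM d 2 (Real.sqrt d) (Real.sqrt d) r s T) ≤
        (2 * d + d - 1) / (2 * d) ↔
      p ≤ 1 / (d + 1) := by
  obtain ⟨hr, hs, hT⟩ := coeffs d hd p l htr horth r s T (hρ.symm.trans hexp)
  have hdR : (2 : ℝ) ≤ (d : ℝ) := by exact_mod_cast hd
  have hdR0 : (0 : ℝ) < (d : ℝ) := by linarith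
  have hdC0 : (d : ℂ) ≠ 0 := by
    simp only [ne_eq, Nat.cast_eq_zero]; omega
  set t : ℝ := p / (2 * d) with ht
  set c : ℂ := ((t ^ 2 : ℝ) : ℂ) with hcdef
  set J : Matrix (Fin 2) (Fin 2) ℂ := Matrix.of (fun _ _ => ((1/2 : ℝ) : ℂ)) with hJ
  set X : Matrix (Fin 2 ⊕ Fin (d ^ 2 - 1)) (Fin 2 ⊕ Fin (d ^ 2 - 1)) ℂ :=
    extCorrTensorGM d 2 (Real.sqrt d) (Real.sqrt d) r s T with hX
  -- Step 1: X is block diagonal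
  have hXF : X = Matrix.fromBlocks J 0 0 T := by
    have hsq2 : (d:ℝ) / (2 * (d:ℝ)) = 2⁻¹ := by
      rw [div_eq_iff (by positivity)]
      ring
    ext i j
    cases i <;> cases j <;>
      simp [X, extCorrTensorGM, J, hr, hs, hsq2]
  -- Step 2: the Gram matrix
  have hJH : Jᴴ = J := by
    ext i j
    simp [J, Matrix.conjTranspose_apply, Complex.conj_ofReal]
  have hJJ : J * J = J := by
    ext i j
    simp [J, Matrix.mul_apply, Fin.sum_univ_two]
  have hTH : ∀ a b, Tᴴ a b = (p : ℂ) / (4 * d) * (l b * (l a)ᵀ).trace := by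
    intro a b
    rw [Matrix.conjTranspose_apply, hT b a, star_mul']
    rw [C_real l hherm b a]
    congr 1
    simp [Complex.conj_ofReal]
  have hTT : Tᴴ * T = c • 1 := by
    ext a b
    rw [Matrix.mul_apply]
    have : ∀ j, Tᴴ a j * T j b
        = ((p : ℂ) / (4 * d))^2 * ((l a * (l j)ᵀ).trace * (l b * (l j)ᵀ).trace) := by
      intro j
      rw [hTH a j, hT j b, C_symm l j b, C_symm l j a]
      ring
    rw [Finset.sum_congr rfl fun j _ => this j, ← Finset.mul_sum,
      C_mul_C l htr horth hspan a b]
    rw [Matrix.smul_apply, Matrix.one_apply]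
    split_ifs with hab
    · rw [smul_eq_mul, mul_one, hcdef, ht]
      push_cast
      field_simp
      ring
    · simp
  have hGram : Xᴴ * X = Matrix.fromBlocks J 0 0 (c • 1) := by
    rw [hXF, Matrix.fromBlocks_conjTranspose, Matrix.fromBlocks_multiply]
    simp [hJH, hJJ, hTT]
  have hA := Matrix.isHermitian_conjTranspose_mul_self X
  set F : Matrix (Fin 2 ⊕ Fin (d ^ 2 - 1)) (Fin 2 ⊕ Fin (d ^ 2 - 1)) ℂ :=
    Matrix.fromBlocks J 0 0 (c • 1) with hFdef
  have hAF : Xᴴ * X = F := hGram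
  have hmulsm : ∀ (a b : ℂ), (a • (1 : Matrix (Fin (d^2-1)) (Fin (d^2-1)) ℂ)) * (b • 1)
      = (a * b) • 1 := by
    intro a b
    rw [Matrix.smul_mul, Matrix.mul_smul, Matrix.one_mul, smul_smul]
  have hF2 : F * F = Matrix.fromBlocks J 0 0 ((c * c) • 1) := by
    rw [hFdef, Matrix.fromBlocks_multiply, hJJ, hmulsm]
    simp
  have hF3 : F * F * F = Matrix.fromBlocks J 0 0 ((c * c * c) • 1) := by
    rw [hF2, hFdef, Matrix.fromBlocks_multiply, hJJ, hmulsm]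
    simp
  have hcub : (Xᴴ * X) * (Xᴴ * X) * (Xᴴ * X)
      = (((1 + t^2 : ℝ) : ℂ)) • ((Xᴴ * X) * (Xᴴ * X)) + (((-(t^2) : ℝ) : ℂ)) • (Xᴴ * X) := by
    rw [hAF, hF3, hF2, hFdef, Matrix.fromBlocks_smul, Matrix.fromBlocks_smul,
      Matrix.fromBlocks_add]
    have hab1 : (((1 + t^2 : ℝ) : ℂ)) • J + (((-(t^2) : ℝ) : ℂ)) • J = J := by
      rw [← add_smul]
      have : (((1 + t^2 : ℝ) : ℂ)) + (((-(t^2) : ℝ) : ℂ)) = 1 := by push_cast; ring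
      rw [this, one_smul]
    have hab2 : (((1 + t^2 : ℝ) : ℂ)) • ((c * c) • (1 : Matrix (Fin (d^2-1)) (Fin (d^2-1)) ℂ))
        + (((-(t^2) : ℝ) : ℂ)) • (c • 1) = (c * c * c) • 1 := by
      rw [smul_smul, smul_smul, ← add_smul]
      congr 1
      rw [hcdef]
      push_cast
      ring
    rw [hab1, hab2]
    simp
  have heig := eig_cubic (Xᴴ * X) hA (1 + t^2) (-(t^2)) hcub
  set N : ℝ := (d : ℝ)^2 - 1 with hN
  have h1d2 : 1 ≤ d ^ 2 := by nlinarith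
  have hNcast : ((d ^ 2 - 1 : ℕ) : ℂ) = ((N : ℝ) : ℂ) := by
    rw [Nat.cast_sub h1d2, hN]
    push_cast
    ring
  have htrJ : J.trace = 1 := by
    simp [J, Matrix.trace, Fin.sum_univ_two]
  have htrA : (Xᴴ * X).trace = 1 + c * ((N : ℝ) : ℂ) := by
    rw [hAF, hFdef, trace_fromBlocks', htrJ, Matrix.trace_smul, Matrix.trace_one]
    rw [smul_eq_mul]
    congr 2
    rw [← hNcast]
    simp
  have htrA2 : ((Xᴴ * X) * (Xᴴ * X)).trace = 1 + (c * c) * ((N : ℝ) : ℂ) := by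
    rw [hAF, hF2, trace_fromBlocks', htrJ, Matrix.trace_smul, Matrix.trace_one]
    rw [smul_eq_mul]
    congr 2
    rw [← hNcast]
    simp
  have hsum1 : ∑ i, hA.eigenvalues i = 1 + N * t^2 := by
    have h1 := (trace_eq_sum_eigs _ hA).symm.trans htrA
    have h2 : ((∑ i, hA.eigenvalues i : ℝ) : ℂ) = ((1 + N * t^2 : ℝ) : ℂ) := by
      push_cast
      push_cast at h1
      rw [h1, hcdef]
      push_cast
      ring
    exact_mod_cast h2
  have hsum2 : ∑ i, (hA.eigenvalues i)^2 = 1 + N * t^4 := by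
    have h1 := (trace_sq_eq_sum_eigs _ hA).symm.trans htrA2
    have h2 : ((∑ i, (hA.eigenvalues i)^2 : ℝ) : ℂ) = ((1 + N * t^4 : ℝ) : ℂ) := by
      push_cast
      push_cast at h1
      rw [h1, hcdef]
      push_cast
      ring
    exact_mod_cast h2
  have hroots : ∀ i, hA.eigenvalues i = 0 ∨ hA.eigenvalues i = 1 ∨ hA.eigenvalues i = t^2 := by
    intro i
    have h := heig i
    have hf : hA.eigenvalues i * (hA.eigenvalues i - 1) * (hA.eigenvalues i - t^2) = 0 := by
      linear_combination h
    rcases mul_eq_zero.mp hf with h' | h'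
    · rcases mul_eq_zero.mp h' with h'' | h''
      · exact Or.inl h''
      · exact Or.inr (Or.inl (by linarith [sub_eq_zero.mp h'']))
    · exact Or.inr (Or.inr (sub_eq_zero.mp h'))
  have htn : traceNorm X = ∑ i, Real.sqrt (hA.eigenvalues i) := rfl
  have h2d : (0:ℝ) < 2 * (d:ℝ) := by positivity
  by_cases hp0 : p = 0
  · have ht0 : t = 0 := by rw [ht, hp0]; simp
    have hsq : ∀ i, Real.sqrt (hA.eigenvalues i) = hA.eigenvalues i := by
      intro i
      rcases hroots i with h | h | h <;> rw [h] <;> simp [ht0]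
    have hval : traceNorm X = 1 := by
      rw [htn, Finset.sum_congr rfl fun i _ => hsq i, hsum1, ht0]
      ring
    rw [hval]
    constructor
    · intro _
      rw [hp0]
      positivity
    · intro _
      rw [le_div_iff₀ h2d]
      linarith
  · have hppos : 0 < p := lt_of_le_of_ne hp (Ne.symm hp0)
    have htpos : 0 < t := by rw [ht]; positivity
    set β : ℝ := -1 / (t * (1 + t)) with hβ
    have hid : (1 - β) * t^2 + β * t^4 = t := by
      rw [hβ]
      field_simp
      ring
    have hsqrt : ∀ i, Real.sqrt (hA.eigenvalues i)
        = (1 - β) * hA.eigenvalues i + β * (hA.eigenvalues i)^2 := by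
      intro i
      rcases hroots i with h | h | h <;> rw [h]
      · simp
      · rw [Real.sqrt_one]
        ring
      · rw [Real.sqrt_sq htpos.le]
        linear_combination -hid
    have hval : traceNorm X = 1 + N * t := by
      rw [htn, Finset.sum_congr rfl fun i _ => hsqrt i, Finset.sum_add_distrib,
        ← Finset.mul_sum, ← Finset.mul_sum, hsum1, hsum2]
      linear_combination N * hid
    rw [hval]
    have hd1 : (0:ℝ) < (d:ℝ) - 1 := by linarith
    have hc1 : (N * t) * (2 * (d:ℝ)) = ((d:ℝ)^2 - 1) * p := by
      rw [ht, hN]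
      field_simp
    constructor
    · intro h
      have h' := (le_div_iff₀ h2d).mp h
      rw [le_div_iff₀ (show (0:ℝ) < (d:ℝ) + 1 by positivity)]
      have key1 : ((d:ℝ)^2 - 1) * p ≤ (d:ℝ) - 1 := by nlinarith [h', hc1]
      have key2 : ((d:ℝ) - 1) * (p * ((d:ℝ) + 1)) ≤ ((d:ℝ) - 1) * 1 := by nlinarith [key1]
      exact le_of_mul_le_mul_left key2 hd1
    · intro h
      have h' := (le_div_iff₀ (show (0:ℝ) < (d:ℝ) + 1 by positivity)).mp h
      rw [le_div_iff₀ h2d]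
      nlinarith [hc1, mul_le_mul_of_nonneg_left h' hd1.le]
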